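/- arXiv:0907.1108 — 2 statements merged into one kernel-verified Lean document; each statement's English description precedes it below -/
import Mathlib

section
/- Let k be a field of characteristic 0, n ≥ 2, and α_2, ..., α_{n-1} ∈ k. In k[[x,y]], the quotient by the ideal J = (x^n, y^2 + α_2 x^2 + ... + α_{n-1} x^{n-1}) has k-vector space dimension 2n; moreover J is generated by a regular sequence in k[[x,y]] (i.e. the quotient is a complete intersection). -/
open MvPowerSeries
set_option synthInstance.maxHeartbeats 1000000
set_option maxHeartbeats 1000000

namespace Stmt4Aux

variable {k : Type*} [Field k] (α : ℕ → k) (n : ℕ) (c : ℕ → ℕ → k)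

/-- Fuel-based auxiliary recursion for Weierstrass-type division. -/
def vF : ℕ → ℕ → ℕ → k
  | 0, _, _ => 0
  | (F+1), i, j =>
      c i (j+2) - ∑ a ∈ Finset.Icc 2 (n-1), (if a ≤ i then α a * vF F (i-a) (j+2) else 0)

lemma vF_stable : ∀ i F G j, i < F → i < G → vF α n c F i j = vF α n c G i j := by
  intro i
  induction i using Nat.strong_induction_on with
  | _ i ih =>
    intro F G j hF hG
    match F, G with
    | F+1, G+1 =>
      simp only [vF]
      congr 1
      apply Finset.sum_congr rfl
      intro a ha
      rw [Finset.mem_Icc] at ha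
      split_ifs with h
      · rw [ih (i-a) (by omega) F G (j+2) (by omega) (by omega)]
      · rfl

/-- The division coefficients. -/
def vv (i j : ℕ) : k := vF α n c (i+1) i j

lemma vv_rec (i j : ℕ) :
    vv α n c i j = c i (j+2) -
      ∑ a ∈ Finset.Icc 2 (n-1), (if a ≤ i then α a * vv α n c (i-a) (j+2) else 0) := by
  show vF α n c (i+1) i j = _
  simp only [vF]
  congr 1
  apply Finset.sum_congr rfl
  intro a ha
  rw [Finset.mem_Icc] at ha
  split_ifs with h
  · rw [show vv α n c (i-a) (j+2) = vF α n c ((i-a)+1) (i-a) (j+2) from rfl,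
      vF_stable α n c (i-a) i ((i-a)+1) (j+2) (by omega) (by omega)]
  · rfl

lemma vv_zero (hc : ∀ i j, i + j < n + 2 → c i j = 0) :
    ∀ i j, i + j < n → vv α n c i j = 0 := by
  intro i
  induction i using Nat.strong_induction_on with
  | _ i ih =>
    intro j hij
    rw [vv_rec, hc i (j+2) (by omega), zero_sub, neg_eq_zero]
    apply Finset.sum_eq_zero
    intro a ha
    rw [Finset.mem_Icc] at ha
    split_ifs with h
    · rw [ih (i-a) (by omega) (j+2) (by omega), mul_zero]
    · rfl

end Stmt4Aux

open Stmt4Aux Finsupp Pointwise in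
/-- In `k[[x,y]]` (char 0), the quotient by `J = (xⁿ, y² + α₂x² + ⋯ + α_{n-1}x^{n-1})`
has `k`-dimension `2n`, and the two generators form a regular sequence
(the quotient is a complete intersection). -/
theorem stmt4 (k : Type*) [Field k] [CharZero k] (n : ℕ) (hn : 2 ≤ n) (α : ℕ → k)
    (f g : MvPowerSeries (Fin 2) k)
    (hf : f = (X 0 : MvPowerSeries (Fin 2) k) ^ n)
    (hg : g = (X 1 : MvPowerSeries (Fin 2) k) ^ 2 +
      ∑ i ∈ Finset.Icc 2 (n - 1), C (α i) * X 0 ^ i) :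
    Module.finrank k (MvPowerSeries (Fin 2) k ⧸ Ideal.span {f, g}) = 2 * n ∧
    RingTheory.Sequence.IsRegular (MvPowerSeries (Fin 2) k) [f, g] := by
  classical
  set J : Ideal (MvPowerSeries (Fin 2) k) := Ideal.span {f, g} with hJ
  -- basic finsupp facts
  have h_single : ∀ d : Fin 2 →₀ ℕ,
      d = Finsupp.single 0 (d 0) + Finsupp.single 1 (d 1) := by
    intro d
    ext s
    fin_cases s <;> simp [Finsupp.single_apply]
  have hexp : ∀ (i j : ℕ) (d : Fin 2 →₀ ℕ),
      (d = Finsupp.single 0 i + Finsupp.single 1 j) ↔ (d 0 = i ∧ d 1 = j) := by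
    intro i j d
    constructor
    · rintro rfl
      constructor <;> simp [Finsupp.single_apply]
    · rintro ⟨h0, h1⟩
      conv_lhs => rw [h_single d]
      rw [h0, h1]
  have hsub0 : ∀ (d : Fin 2 →₀ ℕ) (a : ℕ),
      ((d - Finsupp.single 0 a : Fin 2 →₀ ℕ) 0) = d 0 - a ∧ ((d - Finsupp.single 0 a : Fin 2 →₀ ℕ) 1) = d 1 := by
    intro d a
    constructor <;> simp [Finsupp.tsub_apply, Finsupp.single_apply]
  have hsub1 : ∀ d : Fin 2 →₀ ℕ,
      ((d - Finsupp.single 1 2 : Fin 2 →₀ ℕ) 0) = d 0 ∧ ((d - Finsupp.single 1 2 : Fin 2 →₀ ℕ) 1) = d 1 - 2 := by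
    intro d
    constructor <;> simp [Finsupp.tsub_apply, Finsupp.single_apply]
  have hXX : ∀ i j : ℕ, (X 0 : MvPowerSeries (Fin 2) k)^i * X 1^j
      = monomial (Finsupp.single 0 i + Finsupp.single 1 j) 1 := by
    intro i j
    rw [X_pow_eq, X_pow_eq, monomial_mul_monomial, one_mul]
  have hXXc : ∀ (i j : ℕ) (d : Fin 2 →₀ ℕ),
      coeff d ((X 0 : MvPowerSeries (Fin 2) k)^i * X 1^j)
        = if d 0 = i ∧ d 1 = j then 1 else 0 := by
    intro i j d
    rw [hXX, coeff_monomial, if_congr (hexp i j d) rfl rfl]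
  -- coefficient formula for g * v
  have hgcoeff : ∀ (v : MvPowerSeries (Fin 2) k) (d : Fin 2 →₀ ℕ),
      coeff d (g * v) =
        (if 2 ≤ d 1 then coeff (d - Finsupp.single 1 2) v else 0)
        + ∑ a ∈ Finset.Icc 2 (n-1),
            (if a ≤ d 0 then α a * coeff (d - Finsupp.single 0 a) v else 0) := by
    intro v d
    rw [hg, add_mul, map_add]
    congr 1
    · rw [X_pow_eq, coeff_monomial_mul]
      simp only [Finsupp.single_le_iff, one_mul]
    · rw [Finset.sum_mul, map_sum]
      apply Finset.sum_congr rfl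
      intro a _
      rw [X_pow_eq, ← monomial_zero_eq_C_apply, monomial_mul_monomial, zero_add, mul_one,
        coeff_monomial_mul]
      simp only [Finsupp.single_le_iff]
  have hXnco : ∀ (z : MvPowerSeries (Fin 2) k) (d : Fin 2 →₀ ℕ), d 0 < n →
      coeff d ((X 0 : MvPowerSeries (Fin 2) k)^n * z) = 0 := by
    intro z d hd
    exact X_pow_dvd_iff.mp (dvd_mul_right _ _) d hd
  have hfcoeff : ∀ (z : MvPowerSeries (Fin 2) k) (d : Fin 2 →₀ ℕ), d 0 < n →
      coeff d (f * z) = 0 := by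
    intro z d hd
    rw [hf]
    exact hXnco z d hd
  -- the key vanishing lemma
  have L1 : ∀ v : MvPowerSeries (Fin 2) k,
      (∀ d : Fin 2 →₀ ℕ, 2 ≤ d 1 → d 0 < n → coeff d (g * v) = 0) →
      ∀ d : Fin 2 →₀ ℕ, d 0 < n → coeff d v = 0 := by
    intro v hv
    suffices H : ∀ i, ∀ d : Fin 2 →₀ ℕ, d 0 = i → i < n → coeff d v = 0 by
      intro d hd
      exact H (d 0) d rfl hd
    intro i
    induction i using Nat.strong_induction_on with
    | _ i ih =>
      intro d hd hi
      have e1 : ((d + Finsupp.single 1 2 : Fin 2 →₀ ℕ) 1) = d 1 + 2 := by simp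
      have e0 : ((d + Finsupp.single 1 2 : Fin 2 →₀ ℕ) 0) = i := by simp [hd, Finsupp.single_apply]
      have h2 := hv (d + Finsupp.single 1 2) (by rw [e1]; omega) (by rw [e0]; exact hi)
      rw [hgcoeff v (d + Finsupp.single 1 2), if_pos (by rw [e1]; omega)] at h2
      have e2 : d + Finsupp.single 1 2 - Finsupp.single 1 2 = d := by
        ext s
        simp [Finsupp.tsub_apply]
      rw [e2] at h2
      have hz : ∑ a ∈ Finset.Icc 2 (n-1),
          (if a ≤ ((d + Finsupp.single 1 2 : Fin 2 →₀ ℕ) 0) then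
            α a * coeff ((d + Finsupp.single 1 2) - Finsupp.single 0 a) v else 0) = 0 := by
        apply Finset.sum_eq_zero
        intro a ha
        rw [Finset.mem_Icc] at ha
        split_ifs with hcond
        · rw [e0] at hcond
          have ea : ((d + Finsupp.single 1 2 - Finsupp.single 0 a : Fin 2 →₀ ℕ) 0) = i - a := by
            rw [(hsub0 _ a).1, e0]
          rw [ih (i - a) (by omega) _ ea (by omega), mul_zero]
        · rfl
      rw [hz, add_zero] at h2
      exact h2
  -- the tail lemma : series of order ≥ n+2 lie in J
  have L2 : ∀ h : MvPowerSeries (Fin 2) k,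
      (∀ d : Fin 2 →₀ ℕ, d 0 + d 1 < n + 2 → coeff d h = 0) → h ∈ J := by
    intro h hh
    set c : ℕ → ℕ → k := fun i j => coeff (Finsupp.single 0 i + Finsupp.single 1 j) h with hc
    have hcd : ∀ d : Fin 2 →₀ ℕ, coeff d h = c (d 0) (d 1) := by
      intro d
      conv_lhs => rw [h_single d]
    have hsmall : ∀ i j, i + j < n + 2 → c i j = 0 := by
      intro i j hij
      apply hh
      have e0 : (Finsupp.single 0 i + Finsupp.single 1 j : Fin 2 →₀ ℕ) 0 = i := by
        simp [Finsupp.single_apply]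
      have e1 : (Finsupp.single 0 i + Finsupp.single 1 j : Fin 2 →₀ ℕ) 1 = j := by
        simp [Finsupp.single_apply]
      rw [e0, e1]
      exact hij
    set V : MvPowerSeries (Fin 2) k := fun d => Stmt4Aux.vv α n c (d 0) (d 1) with hV
    have hVc : ∀ d : Fin 2 →₀ ℕ, coeff d V = Stmt4Aux.vv α n c (d 0) (d 1) := fun d => rfl
    have hgV : ∀ d : Fin 2 →₀ ℕ, 2 ≤ d 1 → coeff d (g * V) = c (d 0) (d 1) := by
      intro d hd2
      rw [hgcoeff V d, if_pos hd2, hVc, (hsub1 d).1, (hsub1 d).2]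
      have hsum : ∑ a ∈ Finset.Icc 2 (n-1),
          (if a ≤ d 0 then α a * coeff (d - Finsupp.single 0 a) V else 0)
          = ∑ a ∈ Finset.Icc 2 (n-1),
            (if a ≤ d 0 then α a * Stmt4Aux.vv α n c (d 0 - a) (d 1) else 0) := by
        apply Finset.sum_congr rfl
        intro a _
        split_ifs with hcond
        · rw [hVc, (hsub0 d a).1, (hsub0 d a).2]
        · rfl
      rw [hsum, Stmt4Aux.vv_rec, show d 1 - 2 + 2 = d 1 by omega]
      ring
    have hrd : ∀ d : Fin 2 →₀ ℕ, d 0 < n → coeff d (h - g * V) = 0 := by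
      intro d hd
      rw [map_sub, hcd]
      by_cases hd2 : 2 ≤ d 1
      · rw [hgV d hd2, sub_self]
      · rw [hgcoeff V d, if_neg hd2]
        have hsum : ∑ a ∈ Finset.Icc 2 (n-1),
            (if a ≤ d 0 then α a * coeff (d - Finsupp.single 0 a) V else 0) = 0 := by
          apply Finset.sum_eq_zero
          intro a ha
          rw [Finset.mem_Icc] at ha
          split_ifs with hcond
          · rw [hVc, (hsub0 d a).1, (hsub0 d a).2,
              Stmt4Aux.vv_zero α n c hsmall (d 0 - a) (d 1) (by omega), mul_zero]
          · rfl
        rw [hsum, hsmall (d 0) (d 1) (by omega)]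
        ring
    obtain ⟨u, hu⟩ := (X_pow_dvd_iff (s := (0 : Fin 2)) (n := n) (φ := h - g * V)).mpr
      (fun m hm => hrd m hm)
    rw [hJ]
    apply Ideal.mem_span_pair.mpr
    refine ⟨u, V, ?_⟩
    rw [hf]
    linear_combination -hu
  -- images of the generators vanish
  have hfJ0 : Ideal.Quotient.mk J f = 0 :=
    Ideal.Quotient.eq_zero_iff_mem.mpr (Ideal.subset_span (Set.mem_insert f {g}))
  have hgJ0 : Ideal.Quotient.mk J g = 0 :=
    Ideal.Quotient.eq_zero_iff_mem.mpr
      (Ideal.subset_span (Set.mem_insert_of_mem f rfl))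
  have hmks : ∀ (a : k) (x : MvPowerSeries (Fin 2) k),
      Ideal.Quotient.mk J (a • x) = a • Ideal.Quotient.mk J x := by
    intro a x
    have h1 := map_smul (Ideal.Quotient.mkₐ k J) a x
    simpa only [Ideal.Quotient.mkₐ_eq_mk] using h1
  -- the candidate basis
  set bfun : Fin n × Fin 2 → (MvPowerSeries (Fin 2) k ⧸ J) :=
    fun q => Ideal.Quotient.mk J ((X 0 : MvPowerSeries (Fin 2) k)^(q.1 : ℕ) * X 1^(q.2 : ℕ))
    with hbfun
  set S : Submodule k (MvPowerSeries (Fin 2) k ⧸ J) := Submodule.span k (Set.range bfun)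
    with hS
  -- all monomial classes lie in S
  have L3 : ∀ j i : ℕ,
      Ideal.Quotient.mk J ((X 0 : MvPowerSeries (Fin 2) k)^i * X 1^j) ∈ S := by
    intro j
    induction j using Nat.strong_induction_on with
    | _ j ihj =>
      intro i
      by_cases hj2 : 2 ≤ j
      · have key : (X 0 : MvPowerSeries (Fin 2) k)^i * X 1^j
            = ((X 0 : MvPowerSeries (Fin 2) k)^i * X 1^(j-2)) * g
              - ∑ a ∈ Finset.Icc 2 (n-1),
                  α a • ((X 0 : MvPowerSeries (Fin 2) k)^(i+a) * X 1^(j-2)) := by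
          rw [hg, mul_add, Finset.mul_sum]
          have h1 : (X 0 : MvPowerSeries (Fin 2) k)^i * X 1^(j-2) * X 1^2
              = X 0^i * X 1^j := by
            rw [mul_assoc, ← pow_add, show j - 2 + 2 = j from by omega]
          have h2 : ∀ a ∈ Finset.Icc 2 (n-1),
              (X 0 : MvPowerSeries (Fin 2) k)^i * X 1^(j-2) * (C (α a) * X 0^a)
              = α a • ((X 0 : MvPowerSeries (Fin 2) k)^(i+a) * X 1^(j-2)) := by
            intro a _
            rw [smul_eq_C_mul, pow_add]
            ring
          rw [Finset.sum_congr rfl h2, h1]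
          ring
        rw [key, map_sub, map_mul, hgJ0, mul_zero, zero_sub, map_sum]
        apply Submodule.neg_mem
        apply Submodule.sum_mem
        intro a ha
        rw [hmks]
        exact Submodule.smul_mem S _ (ihj (j-2) (by omega) (i+a))
      · by_cases hin : n ≤ i
        · have key : (X 0 : MvPowerSeries (Fin 2) k)^i * X 1^j
              = f * (X 0^(i-n) * X 1^j) := by
            rw [hf, ← mul_assoc, ← pow_add, show n + (i - n) = i from by omega]
          rw [key, map_mul, hfJ0, zero_mul]
          exact Submodule.zero_mem _
        · exact Submodule.subset_span ⟨(⟨i, by omega⟩, ⟨j, by omega⟩), rfl⟩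
  -- spanning
  have hsp : ∀ x : MvPowerSeries (Fin 2) k ⧸ J, x ∈ S := by
    intro x
    obtain ⟨h, rfl⟩ := Ideal.Quotient.mk_surjective x
    set c : ℕ → ℕ → k := fun i j => coeff (Finsupp.single 0 i + Finsupp.single 1 j) h with hc
    have hcd : ∀ d : Fin 2 →₀ ℕ, coeff d h = c (d 0) (d 1) := by
      intro d
      conv_lhs => rw [h_single d]
    set T : MvPowerSeries (Fin 2) k :=
      ∑ p ∈ Finset.range (n+2) ×ˢ Finset.range (n+2),
        c p.1 p.2 • ((X 0 : MvPowerSeries (Fin 2) k)^p.1 * X 1^p.2) with hT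
    have hTc : ∀ d : Fin 2 →₀ ℕ, d 0 < n + 2 → d 1 < n + 2 → coeff d T = c (d 0) (d 1) := by
      intro d h0 h1
      rw [hT, map_sum, Finset.sum_eq_single (d 0, d 1)]
      · rw [coeff_smul, hXXc, if_pos ⟨rfl, rfl⟩, mul_one]
      · intro p hp hne
        rw [coeff_smul, hXXc, if_neg, mul_zero]
        rintro ⟨ha, hb⟩
        exact hne (by rw [Prod.ext_iff]; exact ⟨ha.symm, hb.symm⟩)
      · intro hnot
        exact absurd (Finset.mem_product.mpr
          ⟨Finset.mem_range.mpr h0, Finset.mem_range.mpr h1⟩) hnot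
    have hdiff : h - T ∈ J := by
      apply L2
      intro d hd
      rw [map_sub, hcd, hTc d (by omega) (by omega), sub_self]
    have hmk : Ideal.Quotient.mk J h = Ideal.Quotient.mk J T := Ideal.Quotient.eq.mpr hdiff
    rw [hmk, hT, map_sum]
    apply Submodule.sum_mem
    intro p hp
    rw [hmks]
    exact Submodule.smul_mem _ _ (L3 p.2 p.1)
  -- linear independence
  have hindep : LinearIndependent k bfun := by
    rw [Fintype.linearIndependent_iff]
    intro G hG
    set P : MvPowerSeries (Fin 2) k :=
      ∑ q : Fin n × Fin 2,
        G q • ((X 0 : MvPowerSeries (Fin 2) k)^(q.1 : ℕ) * X 1^(q.2 : ℕ)) with hP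
    have hPc : ∀ d : Fin 2 →₀ ℕ, coeff d P
        = ∑ q : Fin n × Fin 2, G q * (if d 0 = (q.1 : ℕ) ∧ d 1 = (q.2 : ℕ) then 1 else 0) := by
      intro d
      rw [hP, map_sum]
      apply Finset.sum_congr rfl
      intro q _
      rw [coeff_smul, hXXc]
    have hPa : ∀ d : Fin 2 →₀ ℕ, (2 ≤ d 1 ∨ n ≤ d 0) → coeff d P = 0 := by
      intro d hd
      rw [hPc]
      apply Finset.sum_eq_zero
      intro q _
      split_ifs with hq
      · exfalso
        have h1 := q.1.isLt
        have h2 := q.2.isLt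
        rcases hd with h | h <;> omega
      · rw [mul_zero]
    have hPb : ∀ q : Fin n × Fin 2,
        coeff (Finsupp.single 0 (q.1 : ℕ) + Finsupp.single 1 (q.2 : ℕ)) P = G q := by
      intro q
      have e0 : (Finsupp.single 0 (q.1 : ℕ) + Finsupp.single 1 (q.2 : ℕ) : Fin 2 →₀ ℕ) 0
          = (q.1 : ℕ) := by simp [Finsupp.single_apply]
      have e1 : (Finsupp.single 0 (q.1 : ℕ) + Finsupp.single 1 (q.2 : ℕ) : Fin 2 →₀ ℕ) 1
          = (q.2 : ℕ) := by simp [Finsupp.single_apply]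
      rw [hPc, Finset.sum_eq_single q]
      · rw [e0, e1, if_pos ⟨rfl, rfl⟩, mul_one]
      · intro q' _ hne
        rw [e0, e1]
        split_ifs with hq
        · exfalso
          apply hne
          obtain ⟨ha, hb⟩ := hq
          exact Prod.ext (Fin.ext ha.symm) (Fin.ext hb.symm)
        · rw [mul_zero]
      · intro hnot
        exact absurd (Finset.mem_univ q) hnot
    have hmkP : Ideal.Quotient.mk J P = 0 := by
      rw [hP, map_sum]
      rw [show (0 : MvPowerSeries (Fin 2) k ⧸ J) = ∑ q : Fin n × Fin 2, G q • bfun q from hG.symm]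
      apply Finset.sum_congr rfl
      intro q _
      rw [hmks]
    have hPJ : P ∈ J := Ideal.Quotient.eq_zero_iff_mem.mp hmkP
    rw [hJ] at hPJ
    obtain ⟨u, w, huw⟩ := Ideal.mem_span_pair.mp hPJ
    have hgw : ∀ d : Fin 2 →₀ ℕ, 2 ≤ d 1 → d 0 < n → coeff d (g * w) = 0 := by
      intro d h2 h0
      have hrw : g * w = P - u * f := by linear_combination huw
      rw [hrw, map_sub, hPa d (Or.inl h2), mul_comm u f, hfcoeff u d h0, sub_self]
    have hw := L1 w hgw
    obtain ⟨w2, hw2⟩ := (X_pow_dvd_iff (s := (0 : Fin 2)) (n := n) (φ := w)).mpr hw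
    intro q
    have e0 : (Finsupp.single 0 (q.1 : ℕ) + Finsupp.single 1 (q.2 : ℕ) : Fin 2 →₀ ℕ) 0
        = (q.1 : ℕ) := by simp [Finsupp.single_apply]
    have hq1 : (Finsupp.single 0 (q.1 : ℕ) + Finsupp.single 1 (q.2 : ℕ) : Fin 2 →₀ ℕ) 0 < n := by
      rw [e0]; exact q.1.isLt
    have hzero : coeff (Finsupp.single 0 (q.1 : ℕ) + Finsupp.single 1 (q.2 : ℕ)) P = 0 := by
      rw [← huw, map_add, mul_comm u f, hfcoeff u _ hq1]
      have : w * g = (X 0 : MvPowerSeries (Fin 2) k)^n * (w2 * g) := by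
        rw [hw2]; ring
      rw [this, hXnco _ _ hq1, add_zero]
    rw [hPb q] at hzero
    exact hzero
  -- nontriviality of quotient by constant coefficients
  have hconst : ∀ x ∈ J, constantCoeff x = 0 := by
    have hsub : J ≤ RingHom.ker (constantCoeff) := by
      rw [hJ]
      apply Ideal.span_le.mpr
      rintro y hy
      simp only [Set.mem_insert_iff, Set.mem_singleton_iff] at hy
      rcases hy with rfl | rfl
      · rw [SetLike.mem_coe, RingHom.mem_ker, hf, map_pow, constantCoeff_X,
          zero_pow (by omega)]
      · rw [SetLike.mem_coe, RingHom.mem_ker, hg, map_add, map_pow, constantCoeff_X,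
          zero_pow (by omega), map_sum, zero_add]
        apply Finset.sum_eq_zero
        intro a ha
        rw [Finset.mem_Icc] at ha
        rw [map_mul, map_pow, constantCoeff_X, zero_pow (by omega), mul_zero]
    intro x hx
    exact RingHom.mem_ker.mp (hsub hx)
  -- regularity: first element
  have hX0ne : (X 0 : MvPowerSeries (Fin 2) k) ≠ 0 := by
    intro h
    have h1 := coeff_index_single_self_X (R := k) (0 : Fin 2)
    rw [h, map_zero] at h1
    exact zero_ne_one h1
  have hf0 : f ≠ 0 := by
    rw [hf]
    exact pow_ne_zero n hX0ne
  have reg1 : IsSMulRegular (MvPowerSeries (Fin 2) k) f := by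
    intro a b hab
    simp only [smul_eq_mul] at hab
    exact mul_left_cancel₀ hf0 hab
  -- pointwise smul membership helper
  have hmem : ∀ z : MvPowerSeries (Fin 2) k,
      z ∈ f • (⊤ : Submodule (MvPowerSeries (Fin 2) k) (MvPowerSeries (Fin 2) k))
        ↔ ∃ u, f * u = z := by
    intro z
    rw [← SetLike.mem_coe, Submodule.coe_pointwise_smul, Set.mem_smul_set]
    constructor
    · rintro ⟨u, -, rfl⟩
      exact ⟨u, by rw [smul_eq_mul]⟩
    · rintro ⟨u, rfl⟩
      exact ⟨u, trivial, by rw [smul_eq_mul]⟩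
  have reg2 : IsSMulRegular (QuotSMulTop f (MvPowerSeries (Fin 2) k)) g := by
    intro x y hxy
    obtain ⟨x, rfl⟩ := Submodule.Quotient.mk_surjective _ x
    obtain ⟨y, rfl⟩ := Submodule.Quotient.mk_surjective _ y
    dsimp only at hxy
    rw [← Submodule.Quotient.mk_smul, ← Submodule.Quotient.mk_smul,
      Submodule.Quotient.eq] at hxy
    rw [Submodule.Quotient.eq]
    have hxy' : g * (x - y) ∈ f • (⊤ : Submodule (MvPowerSeries (Fin 2) k) _) := by
      have : g • x - g • y = g * (x - y) := by
        simp only [smul_eq_mul]; ring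
      rwa [this] at hxy
    obtain ⟨u, hu⟩ := (hmem _).mp hxy'
    have hco : ∀ d : Fin 2 →₀ ℕ, 2 ≤ d 1 → d 0 < n → coeff d (g * (x - y)) = 0 := by
      intro d _ h0
      rw [← hu]
      exact hfcoeff u d h0
    have hv := L1 (x - y) hco
    obtain ⟨w, hw⟩ := (X_pow_dvd_iff (s := (0 : Fin 2)) (n := n) (φ := x - y)).mpr hv
    apply (hmem _).mpr
    exact ⟨w, by rw [hf, ← hw]⟩
  constructor
  · -- dimension
    have B : Module.Basis (Fin n × Fin 2) k (MvPowerSeries (Fin 2) k ⧸ J) :=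
      Module.Basis.mk hindep (fun x _ => hsp x)
    rw [Module.finrank_eq_card_basis B, Fintype.card_prod, Fintype.card_fin, Fintype.card_fin]
    omega
  · -- regular sequence
    refine { toIsWeaklyRegular := ?_, top_ne_smul := ?_ }
    · exact RingTheory.Sequence.IsWeaklyRegular.cons reg1
        ((RingTheory.Sequence.isWeaklyRegular_singleton_iff _ _).mpr reg2)
    · intro hEq
      have h1 : (1 : MvPowerSeries (Fin 2) k) ∈
          Ideal.ofList [f, g] • (⊤ : Submodule (MvPowerSeries (Fin 2) k) _) := by
        rw [← hEq]; trivial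
      have hle : Ideal.ofList [f, g] • (⊤ : Submodule (MvPowerSeries (Fin 2) k) _)
          ≤ (Ideal.ofList [f, g] : Ideal (MvPowerSeries (Fin 2) k)) :=
        Submodule.smul_le.mpr fun r hr m _ => by
          rw [smul_eq_mul]
          exact Ideal.mul_mem_right m _ hr
      have h2 : (1 : MvPowerSeries (Fin 2) k) ∈ Ideal.ofList [f, g] := hle h1
      have hofl : (Ideal.ofList [f, g] : Ideal (MvPowerSeries (Fin 2) k)) = J := by
        rw [hJ]
        unfold Ideal.ofList
        congr 1
        ext r
        simp
      rw [hofl] at h2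
      have h3 := hconst 1 h2
      rw [map_one] at h3
      exact one_ne_zero h3
end

section
/- Let k be an algebraically closed field of characteristic 0 and let I_3 = (c_1x^2 + c_2xy + c_3y^2, x^3, x^2y, xy^2, y^3) ⊂ k[x,y] with (c_1,c_2,c_3) ≠ (0,0,0). Then after a linear change of coordinates in x,y, the ideal I_3 equals either (x^2, xy^2, y^3) (when the binary quadratic form c_1x^2+c_2xy+c_3y^2 has a double root, i.e. c_2^2 - 4c_1c_3 = 0) or (x^3, xy, y^3) (when c_2^2 - 4c_1c_3 ≠ 0). -/
open MvPolynomial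
set_option synthInstance.maxHeartbeats 1000000
set_option maxHeartbeats 1000000

section StmtAux
variable {k : Type*} [Field k]

lemma aux_cancel {c : k} (hc : c ≠ 0) {J : Ideal (MvPolynomial (Fin 2) k)}
    {p : MvPolynomial (Fin 2) k} (h : C c * p ∈ J) : p ∈ J := by
  have hp : p = C c⁻¹ * (C c * p) := by
    rw [← mul_assoc, ← C_mul, inv_mul_cancel₀ hc, C_1, one_mul]
  rw [hp]; exact J.mul_mem_left _ h

lemma aux_prodlin (a₁ b₁ a₂ b₂ a₃ b₃ : k) :
    (C a₁ * X 0 + C b₁ * X 1) * (C a₂ * X 0 + C b₂ * X 1) * (C a₃ * X 0 + C b₃ * X 1)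
      ∈ Ideal.span ({X 0 ^ 3, X 0 ^ 2 * X 1, X 0 * X 1 ^ 2, X 1 ^ 3} :
        Set (MvPolynomial (Fin 2) k)) := by
  have h : (C a₁ * X 0 + C b₁ * X 1) * (C a₂ * X 0 + C b₂ * X 1) * (C a₃ * X 0 + C b₃ * X 1)
      = (C (a₁*a₂*a₃) * (X 0 ^ 3) + C (a₁*a₂*b₃ + a₁*b₂*a₃ + b₁*a₂*a₃) * (X 0 ^ 2 * X 1)
        + C (a₁*b₂*b₃ + b₁*a₂*b₃ + b₁*b₂*a₃) * (X 0 * X 1 ^ 2) + C (b₁*b₂*b₃) * (X 1 ^ 3)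
        : MvPolynomial (Fin 2) k) := by
    simp only [map_mul, map_add]; ring
  rw [h]
  refine add_mem (add_mem (add_mem ?_ ?_) ?_) ?_ <;>
    exact Ideal.mul_mem_left _ _ (Ideal.subset_span (by simp))

lemma aux_cubes_le_I (q' : MvPolynomial (Fin 2) k) :
    Ideal.span ({X 0 ^ 3, X 0 ^ 2 * X 1, X 0 * X 1 ^ 2, X 1 ^ 3} :
        Set (MvPolynomial (Fin 2) k))
      ≤ Ideal.span {q', X 0 ^ 3, X 0 ^ 2 * X 1, X 0 * X 1 ^ 2, X 1 ^ 3} := by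
  refine Ideal.span_le.mpr ?_
  rintro p hp
  exact Ideal.subset_span
    (by simp only [Set.mem_insert_iff, Set.mem_singleton_iff] at hp ⊢; tauto)

lemma aux_cubes_le_A :
    Ideal.span ({X 0 ^ 3, X 0 ^ 2 * X 1, X 0 * X 1 ^ 2, X 1 ^ 3} :
        Set (MvPolynomial (Fin 2) k))
      ≤ Ideal.span {X 0 ^ 2, X 0 * X 1 ^ 2, X 1 ^ 3} := by
  refine Ideal.span_le.mpr ?_
  rintro p hp
  simp only [Set.mem_insert_iff, Set.mem_singleton_iff] at hp
  rcases hp with rfl | rfl | rfl | rfl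
  · have e : (X 0 : MvPolynomial (Fin 2) k) ^ 3 = X 0 * X 0 ^ 2 := by ring
    rw [e]; exact Ideal.mul_mem_left _ _ (Ideal.subset_span (by simp))
  · have e : (X 0 : MvPolynomial (Fin 2) k) ^ 2 * X 1 = X 1 * X 0 ^ 2 := by ring
    rw [e]; exact Ideal.mul_mem_left _ _ (Ideal.subset_span (by simp))
  · exact Ideal.subset_span (by simp)
  · exact Ideal.subset_span (by simp)

lemma aux_cubes_le_B :
    Ideal.span ({X 0 ^ 3, X 0 ^ 2 * X 1, X 0 * X 1 ^ 2, X 1 ^ 3} :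
        Set (MvPolynomial (Fin 2) k))
      ≤ Ideal.span {X 0 ^ 3, X 0 * X 1, X 1 ^ 3} := by
  refine Ideal.span_le.mpr ?_
  rintro p hp
  simp only [Set.mem_insert_iff, Set.mem_singleton_iff] at hp
  rcases hp with rfl | rfl | rfl | rfl
  · exact Ideal.subset_span (by simp)
  · have e : (X 0 : MvPolynomial (Fin 2) k) ^ 2 * X 1 = X 0 * (X 0 * X 1) := by ring
    rw [e]; exact Ideal.mul_mem_left _ _ (Ideal.subset_span (by simp))
  · have e : (X 0 : MvPolynomial (Fin 2) k) * X 1 ^ 2 = X 1 * (X 0 * X 1) := by ring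
    rw [e]; exact Ideal.mul_mem_left _ _ (Ideal.subset_span (by simp))
  · exact Ideal.subset_span (by simp)

lemma aux_mem_span (f : Fin 2 → MvPolynomial (Fin 2) k)
    (w t : MvPolynomial (Fin 2) k) (T : Set (MvPolynomial (Fin 2) k))
    (heq : aeval f w = t) (ht : t ∈ Ideal.span T) :
    (aeval f) w ∈ Ideal.span T := heq ▸ ht

lemma aux_mem_map (M : Matrix (Fin 2) (Fin 2) k) (S : Set (MvPolynomial (Fin 2) k))
    (w : MvPolynomial (Fin 2) k) {c : k} {t : MvPolynomial (Fin 2) k} (hc : c ≠ 0)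
    (hw : w ∈ Ideal.span S)
    (heq : C c * t = aeval (fun i => C (M i 0) * X 0 + C (M i 1) * X 1) w) :
    t ∈ Ideal.map (aeval (fun i => C (M i 0) * X 0 + C (M i 1) * X 1) :
        MvPolynomial (Fin 2) k →ₐ[k] MvPolynomial (Fin 2) k).toRingHom (Ideal.span S) := by
  refine aux_cancel hc ?_
  rw [heq]
  exact Ideal.mem_map_of_mem _ hw

lemma aux_skeleton (q' : MvPolynomial (Fin 2) k) (M : Matrix (Fin 2) (Fin 2) k)
    (T : Set (MvPolynomial (Fin 2) k))
    (h1 : aeval (fun i => C (M i 0) * X 0 + C (M i 1) * X 1) q' ∈ Ideal.span T)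
    (h2 : Ideal.span ({X 0 ^ 3, X 0 ^ 2 * X 1, X 0 * X 1 ^ 2, X 1 ^ 3} :
        Set (MvPolynomial (Fin 2) k)) ≤ Ideal.span T)
    (h3 : Ideal.span T ≤ Ideal.map (aeval (fun i => C (M i 0) * X 0 + C (M i 1) * X 1) :
        MvPolynomial (Fin 2) k →ₐ[k] MvPolynomial (Fin 2) k).toRingHom
        (Ideal.span {q', X 0 ^ 3, X 0 ^ 2 * X 1, X 0 * X 1 ^ 2, X 1 ^ 3})) :
    Ideal.map (aeval (fun i => C (M i 0) * X 0 + C (M i 1) * X 1) :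
        MvPolynomial (Fin 2) k →ₐ[k] MvPolynomial (Fin 2) k).toRingHom
        (Ideal.span {q', X 0 ^ 3, X 0 ^ 2 * X 1, X 0 * X 1 ^ 2, X 1 ^ 3})
      = Ideal.span T := by
  set f : Fin 2 → MvPolynomial (Fin 2) k := fun i => C (M i 0) * X 0 + C (M i 1) * X 1 with hf
  refine le_antisymm ?_ h3
  rw [Ideal.map_span]
  refine Ideal.span_le.mpr ?_
  rintro p ⟨w, hw, rfl⟩
  simp only [Set.mem_insert_iff, Set.mem_singleton_iff] at hw
  have key : ∀ i j : Fin 2,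
      (aeval f) ((X i * (X j * X j) : MvPolynomial (Fin 2) k)) ∈ Ideal.span T := by
    intro i j
    refine h2 ?_
    have e : (aeval f) ((X i * (X j * X j) : MvPolynomial (Fin 2) k)) = (C (M i 0) * X 0 + C (M i 1) * X 1)
        * (C (M j 0) * X 0 + C (M j 1) * X 1) * (C (M j 0) * X 0 + C (M j 1) * X 1) := by
      simp only [map_mul, aeval_X, hf]; ring
    rw [e]
    exact aux_prodlin _ _ _ _ _ _
  rcases hw with rfl | rfl | rfl | rfl | rfl
  · exact h1
  · have e : (X 0 : MvPolynomial (Fin 2) k) ^ 3 = X 0 * (X 0 * X 0) := by ring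
    simp only [AlgHom.toRingHom_eq_coe, RingHom.coe_coe]
    rw [e]
    exact key 0 0
  · have e : (X 0 : MvPolynomial (Fin 2) k) ^ 2 * X 1 = X 1 * (X 0 * X 0) := by ring
    simp only [AlgHom.toRingHom_eq_coe, RingHom.coe_coe]
    rw [e]
    exact key 1 0
  · have e : (X 0 : MvPolynomial (Fin 2) k) * X 1 ^ 2 = X 0 * (X 1 * X 1) := by ring
    simp only [AlgHom.toRingHom_eq_coe, RingHom.coe_coe]
    rw [e]
    exact key 0 1
  · have e : (X 1 : MvPolynomial (Fin 2) k) ^ 3 = X 1 * (X 1 * X 1) := by ring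
    simp only [AlgHom.toRingHom_eq_coe, RingHom.coe_coe]
    rw [e]
    exact key 1 1

end StmtAux

/-- For `I₃ = (c₁x² + c₂xy + c₃y², x³, x²y, xy², y³) ⊂ k[x,y]` with `(c₁,c₂,c₃) ≠ 0` over an
algebraically closed field of characteristic 0: after a linear change of coordinates, `I₃`
equals `(x², xy², y³)` when `c₂² - 4c₁c₃ = 0`, and `(x³, xy, y³)` when `c₂² - 4c₁c₃ ≠ 0`. -/
theorem stmt19 (k : Type*) [Field k] [IsAlgClosed k] [CharZero k]
    (c₁ c₂ c₃ : k) (hc : ¬(c₁ = 0 ∧ c₂ = 0 ∧ c₃ = 0))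
    (I₃ : Ideal (MvPolynomial (Fin 2) k))
    (hI₃ : I₃ = Ideal.span
      {C c₁ * X 0 ^ 2 + C c₂ * X 0 * X 1 + C c₃ * X 1 ^ 2,
       X 0 ^ 3, X 0 ^ 2 * X 1, X 0 * X 1 ^ 2, X 1 ^ 3}) :
    (c₂ ^ 2 - 4 * c₁ * c₃ = 0 →
      ∃ M : Matrix (Fin 2) (Fin 2) k, IsUnit M.det ∧
        Ideal.map (aeval (fun i => C (M i 0) * X 0 + C (M i 1) * X 1) :
            MvPolynomial (Fin 2) k →ₐ[k] MvPolynomial (Fin 2) k).toRingHom I₃ =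
          Ideal.span {(X 0 : MvPolynomial (Fin 2) k) ^ 2, X 0 * X 1 ^ 2, X 1 ^ 3}) ∧
    (c₂ ^ 2 - 4 * c₁ * c₃ ≠ 0 →
      ∃ M : Matrix (Fin 2) (Fin 2) k, IsUnit M.det ∧
        Ideal.map (aeval (fun i => C (M i 0) * X 0 + C (M i 1) * X 1) :
            MvPolynomial (Fin 2) k →ₐ[k] MvPolynomial (Fin 2) k).toRingHom I₃ =
          Ideal.span {(X 0 : MvPolynomial (Fin 2) k) ^ 3, X 0 * X 1, X 1 ^ 3}) := by
  subst hI₃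
  have h2k : (2 : k) ≠ 0 := by norm_num
  have h4k : (4 : k) ≠ 0 := by norm_num
  constructor
  · -- double root case
    intro hd
    by_cases hc1 : c₁ = 0
    · -- c₂ = 0, c₃ ≠ 0 : swap coordinates
      have hc2 : c₂ = 0 := by
        have h2 : c₂ ^ 2 = 0 := by rw [hc1] at hd; linear_combination hd
        exact pow_eq_zero_iff (n := 2) (by norm_num) |>.mp h2
      have hc3 : c₃ ≠ 0 := fun h => hc ⟨hc1, hc2, h⟩
      subst hc1; subst hc2
      refine ⟨!![0, 1; 1, 0], ?_, ?_⟩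
      · rw [Matrix.det_fin_two_of]; norm_num
      · refine aux_skeleton _ _ _ ?_ aux_cubes_le_A ?_
        · refine aux_mem_span _ _ (C c₃ * X 0 ^ 2) _ ?_
            (Ideal.mul_mem_left _ _ (Ideal.subset_span (by simp)))
          simp only [map_ofNat, map_mul, map_add, map_sub, map_neg, map_pow, map_one, map_zero,
            aeval_X, aeval_C, algebraMap_eq, Matrix.cons_val', Matrix.cons_val_zero,
            Matrix.cons_val_one, Matrix.head_cons, Matrix.empty_val', Matrix.cons_val_fin_one,
            Matrix.head_fin_const, Matrix.of_apply]
          ring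
        · refine Ideal.span_le.mpr ?_
          rintro p hp
          simp only [Set.mem_insert_iff, Set.mem_singleton_iff] at hp
          rcases hp with rfl | rfl | rfl
          · -- X 0 ^ 2
            refine aux_mem_map _ _ (C (0:k) * X 0 ^ 2 + C (0:k) * X 0 * X 1 + C c₃ * X 1 ^ 2)
              hc3 (Ideal.subset_span (by simp)) ?_
            simp only [map_ofNat, map_mul, map_add, map_sub, map_neg, map_pow, map_one, map_zero,
              aeval_X, aeval_C, algebraMap_eq, Matrix.cons_val', Matrix.cons_val_zero,
              Matrix.cons_val_one, Matrix.head_cons, Matrix.empty_val', Matrix.cons_val_fin_one,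
              Matrix.head_fin_const, Matrix.of_apply]
            ring
          · -- X 0 * X 1 ^ 2  from  X 0 ^ 2 * X 1
            refine aux_mem_map _ _ (X 0 ^ 2 * X 1) one_ne_zero
              (Ideal.subset_span (by simp)) ?_
            simp only [map_ofNat, map_mul, map_add, map_sub, map_neg, map_pow, map_one, map_zero,
              aeval_X, aeval_C, algebraMap_eq, Matrix.cons_val', Matrix.cons_val_zero,
              Matrix.cons_val_one, Matrix.head_cons, Matrix.empty_val', Matrix.cons_val_fin_one,
              Matrix.head_fin_const, Matrix.of_apply]
            ring
          · -- X 1 ^ 3 from X 0 ^ 3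
            refine aux_mem_map _ _ (X 0 ^ 3) one_ne_zero
              (Ideal.subset_span (by simp)) ?_
            simp only [map_ofNat, map_mul, map_add, map_sub, map_neg, map_pow, map_one, map_zero,
              aeval_X, aeval_C, algebraMap_eq, Matrix.cons_val', Matrix.cons_val_zero,
              Matrix.cons_val_one, Matrix.head_cons, Matrix.empty_val', Matrix.cons_val_fin_one,
              Matrix.head_fin_const, Matrix.of_apply]
            ring
    · -- c₁ ≠ 0
      have hdC : ((C c₂ : MvPolynomial (Fin 2) k)) ^ 2 = 4 * C c₁ * C c₃ := by
        have h2 : c₂ ^ 2 = 4 * c₁ * c₃ := by linear_combination hd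
        have := congrArg (fun t : k => (C t : MvPolynomial (Fin 2) k)) h2
        simpa only [map_pow, map_mul, map_ofNat] using this
      refine ⟨!![2*c₁, -c₂; 0, 2*c₁], ?_, ?_⟩
      · rw [Matrix.det_fin_two_of]
        have e : (2*c₁*(2*c₁) - -c₂*0 : k) = (2*c₁)*(2*c₁) := by ring
        rw [e]
        exact isUnit_iff_ne_zero.mpr
          (mul_ne_zero (mul_ne_zero h2k hc1) (mul_ne_zero h2k hc1))
      · refine aux_skeleton _ _ _ ?_ aux_cubes_le_A ?_
        · refine aux_mem_span _ _ (C (4*c₁^3) * X 0 ^ 2) _ ?_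
            (Ideal.mul_mem_left _ _ (Ideal.subset_span (by simp)))
          simp only [map_ofNat, map_mul, map_add, map_sub, map_neg, map_pow, map_one, map_zero,
            aeval_X, aeval_C, algebraMap_eq, Matrix.cons_val', Matrix.cons_val_zero,
            Matrix.cons_val_one, Matrix.head_cons, Matrix.empty_val', Matrix.cons_val_fin_one,
            Matrix.head_fin_const, Matrix.of_apply]
          linear_combination (-(C c₁) * (X 1 : MvPolynomial (Fin 2) k) ^ 2) * hdC
        · refine Ideal.span_le.mpr ?_
          rintro p hp
          simp only [Set.mem_insert_iff, Set.mem_singleton_iff] at hp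
          rcases hp with rfl | rfl | rfl
          · -- X 0 ^ 2 from q
            refine aux_mem_map _ _ (C c₁ * X 0 ^ 2 + C c₂ * X 0 * X 1 + C c₃ * X 1 ^ 2)
              (c := 4*c₁^3) (mul_ne_zero h4k (pow_ne_zero _ hc1))
              (Ideal.subset_span (by simp)) ?_
            simp only [map_ofNat, map_mul, map_add, map_sub, map_neg, map_pow, map_one, map_zero,
              aeval_X, aeval_C, algebraMap_eq, Matrix.cons_val', Matrix.cons_val_zero,
              Matrix.cons_val_one, Matrix.head_cons, Matrix.empty_val', Matrix.cons_val_fin_one,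
              Matrix.head_fin_const, Matrix.of_apply]
            linear_combination ((C c₁) * (X 1 : MvPolynomial (Fin 2) k) ^ 2) * hdC
          · -- X 0 * X 1 ^ 2
            refine aux_mem_map _ _ (C (2*c₁) * (X 0 * X 1 ^ 2) + C c₂ * X 1 ^ 3)
              (c := 16*c₁^4) (mul_ne_zero (by norm_num) (pow_ne_zero _ hc1)) ?_ ?_
            · exact add_mem (Ideal.mul_mem_left _ _ (Ideal.subset_span (by simp)))
                (Ideal.mul_mem_left _ _ (Ideal.subset_span (by simp)))
            simp only [map_ofNat, map_mul, map_add, map_sub, map_neg, map_pow, map_one, map_zero,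
              aeval_X, aeval_C, algebraMap_eq, Matrix.cons_val', Matrix.cons_val_zero,
              Matrix.cons_val_one, Matrix.head_cons, Matrix.empty_val', Matrix.cons_val_fin_one,
              Matrix.head_fin_const, Matrix.of_apply]
            ring
          · -- X 1 ^ 3
            refine aux_mem_map _ _ (X 1 ^ 3)
              (c := 8*c₁^3) (mul_ne_zero (by norm_num) (pow_ne_zero _ hc1))
              (Ideal.subset_span (by simp)) ?_
            simp only [map_ofNat, map_mul, map_add, map_sub, map_neg, map_pow, map_one, map_zero,
              aeval_X, aeval_C, algebraMap_eq, Matrix.cons_val', Matrix.cons_val_zero,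
              Matrix.cons_val_one, Matrix.head_cons, Matrix.empty_val', Matrix.cons_val_fin_one,
              Matrix.head_fin_const, Matrix.of_apply]
            ring
  · -- distinct roots case
    intro hd
    by_cases hc1 : c₁ = 0
    · -- c₂ ≠ 0
      have hc2 : c₂ ≠ 0 := by
        intro h
        exact hd (by rw [hc1, h]; ring)
      subst hc1
      have hinvC : (C c₂ : MvPolynomial (Fin 2) k) * C c₂⁻¹ = 1 := by
        rw [← C_mul, mul_inv_cancel₀ hc2, C_1]
      refine ⟨!![1, -(c₃ * c₂⁻¹); 0, 1], ?_, ?_⟩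
      · rw [Matrix.det_fin_two_of]
        have e : (1*1 - -(c₃ * c₂⁻¹)*0 : k) = 1 := by ring
        rw [e]; exact isUnit_one
      · refine aux_skeleton _ _ _ ?_ aux_cubes_le_B ?_
        · refine aux_mem_span _ _ (C c₂ * (X 0 * X 1)) _ ?_
            (Ideal.mul_mem_left _ _ (Ideal.subset_span (by simp)))
          simp only [map_ofNat, map_mul, map_add, map_sub, map_neg, map_pow, map_one, map_zero,
            aeval_X, aeval_C, algebraMap_eq, Matrix.cons_val', Matrix.cons_val_zero,
            Matrix.cons_val_one, Matrix.head_cons, Matrix.empty_val', Matrix.cons_val_fin_one,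
            Matrix.head_fin_const, Matrix.of_apply]
          linear_combination (-(C c₃) * (X 1 : MvPolynomial (Fin 2) k) ^ 2) * hinvC
        · refine Ideal.span_le.mpr ?_
          rintro p hp
          simp only [Set.mem_insert_iff, Set.mem_singleton_iff] at hp
          rcases hp with rfl | rfl | rfl
          · -- X 0 ^ 3
            refine aux_mem_map _ _
              ((C 1 * X 0 + C (c₃ * c₂⁻¹) * X 1) * (C 1 * X 0 + C (c₃ * c₂⁻¹) * X 1)
                * (C 1 * X 0 + C (c₃ * c₂⁻¹) * X 1)) one_ne_zero
              (aux_cubes_le_I _ (aux_prodlin _ _ _ _ _ _)) ?_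
            simp only [map_ofNat, map_mul, map_add, map_sub, map_neg, map_pow, map_one, map_zero,
              aeval_X, aeval_C, algebraMap_eq, Matrix.cons_val', Matrix.cons_val_zero,
              Matrix.cons_val_one, Matrix.head_cons, Matrix.empty_val', Matrix.cons_val_fin_one,
              Matrix.head_fin_const, Matrix.of_apply]
            ring
          · -- X 0 * X 1 from q
            refine aux_mem_map _ _ (C (0:k) * X 0 ^ 2 + C c₂ * X 0 * X 1 + C c₃ * X 1 ^ 2)
              hc2 (Ideal.subset_span (by simp)) ?_
            simp only [map_ofNat, map_mul, map_add, map_sub, map_neg, map_pow, map_one, map_zero,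
              aeval_X, aeval_C, algebraMap_eq, Matrix.cons_val', Matrix.cons_val_zero,
              Matrix.cons_val_one, Matrix.head_cons, Matrix.empty_val', Matrix.cons_val_fin_one,
              Matrix.head_fin_const, Matrix.of_apply]
            linear_combination ((C c₃) * (X 1 : MvPolynomial (Fin 2) k) ^ 2) * hinvC
          · -- X 1 ^ 3
            refine aux_mem_map _ _ (X 1 ^ 3) one_ne_zero
              (Ideal.subset_span (by simp)) ?_
            simp only [map_ofNat, map_mul, map_add, map_sub, map_neg, map_pow, map_one, map_zero,
              aeval_X, aeval_C, algebraMap_eq, Matrix.cons_val', Matrix.cons_val_zero,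
              Matrix.cons_val_one, Matrix.head_cons, Matrix.empty_val', Matrix.cons_val_fin_one,
              Matrix.head_fin_const, Matrix.of_apply]
            ring
    · -- c₁ ≠ 0 : use a square root of the discriminant
      obtain ⟨s, hs⟩ := IsAlgClosed.exists_pow_nat_eq (c₂ ^ 2 - 4 * c₁ * c₃) (n := 2) (by norm_num)
      have hs0 : s ≠ 0 := by
        intro h
        apply hd
        rw [← hs, h]; ring
      have hsC : ((C s : MvPolynomial (Fin 2) k)) ^ 2 = (C c₂) ^ 2 - 4 * C c₁ * C c₃ := by
        have := congrArg (fun t : k => (C t : MvPolynomial (Fin 2) k)) hs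
        simpa only [map_pow, map_mul, map_sub, map_ofNat] using this
      refine ⟨!![s - c₂, -(c₂ + s); 2*c₁, 2*c₁], ?_, ?_⟩
      · rw [Matrix.det_fin_two_of]
        have e : ((s - c₂)*(2*c₁) - -(c₂ + s)*(2*c₁) : k) = (2*s)*(2*c₁) := by ring
        rw [e]
        exact isUnit_iff_ne_zero.mpr
          (mul_ne_zero (mul_ne_zero h2k hs0) (mul_ne_zero h2k hc1))
      · refine aux_skeleton _ _ _ ?_ aux_cubes_le_B ?_
        · refine aux_mem_span _ _ (C (-(4*c₁*(c₂^2 - 4*c₁*c₃))) * (X 0 * X 1)) _ ?_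
            (Ideal.mul_mem_left _ _ (Ideal.subset_span (by simp)))
          simp only [map_ofNat, map_mul, map_add, map_sub, map_neg, map_pow, map_one, map_zero,
            aeval_X, aeval_C, algebraMap_eq, Matrix.cons_val', Matrix.cons_val_zero,
            Matrix.cons_val_one, Matrix.head_cons, Matrix.empty_val', Matrix.cons_val_fin_one,
            Matrix.head_fin_const, Matrix.of_apply]
          linear_combination ((C c₁) * (X 0 : MvPolynomial (Fin 2) k) ^ 2
            - 2 * (C c₁) * (X 0 : MvPolynomial (Fin 2) k) * X 1
            + (C c₁) * (X 1 : MvPolynomial (Fin 2) k) ^ 2) * hsC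
        · refine Ideal.span_le.mpr ?_
          rintro p hp
          simp only [Set.mem_insert_iff, Set.mem_singleton_iff] at hp
          rcases hp with rfl | rfl | rfl
          · -- X 0 ^ 3
            refine aux_mem_map _ _
              ((C (2*c₁) * X 0 + C (c₂ + s) * X 1) * (C (2*c₁) * X 0 + C (c₂ + s) * X 1)
                * (C (2*c₁) * X 0 + C (c₂ + s) * X 1))
              (c := 64*c₁^3*s^3)
              (mul_ne_zero (mul_ne_zero (by norm_num) (pow_ne_zero _ hc1)) (pow_ne_zero _ hs0))
              (aux_cubes_le_I _ (aux_prodlin _ _ _ _ _ _)) ?_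
            simp only [map_ofNat, map_mul, map_add, map_sub, map_neg, map_pow, map_one, map_zero,
              aeval_X, aeval_C, algebraMap_eq, Matrix.cons_val', Matrix.cons_val_zero,
              Matrix.cons_val_one, Matrix.head_cons, Matrix.empty_val', Matrix.cons_val_fin_one,
              Matrix.head_fin_const, Matrix.of_apply]
            ring
          · -- X 0 * X 1 from q
            refine aux_mem_map _ _ (C c₁ * X 0 ^ 2 + C c₂ * X 0 * X 1 + C c₃ * X 1 ^ 2)
              (c := -(4*c₁*(c₂^2 - 4*c₁*c₃)))
              (neg_ne_zero.mpr (mul_ne_zero (mul_ne_zero h4k hc1) hd))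
              (Ideal.subset_span (by simp)) ?_
            simp only [map_ofNat, map_mul, map_add, map_sub, map_neg, map_pow, map_one, map_zero,
              aeval_X, aeval_C, algebraMap_eq, Matrix.cons_val', Matrix.cons_val_zero,
              Matrix.cons_val_one, Matrix.head_cons, Matrix.empty_val', Matrix.cons_val_fin_one,
              Matrix.head_fin_const, Matrix.of_apply]
            linear_combination (-(C c₁) * (X 0 : MvPolynomial (Fin 2) k) ^ 2
              + 2 * (C c₁) * (X 0 : MvPolynomial (Fin 2) k) * X 1
              - (C c₁) * (X 1 : MvPolynomial (Fin 2) k) ^ 2) * hsC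
          · -- X 1 ^ 3
            refine aux_mem_map _ _
              ((C (2*c₁) * X 0 + C (c₂ - s) * X 1) * (C (2*c₁) * X 0 + C (c₂ - s) * X 1)
                * (C (2*c₁) * X 0 + C (c₂ - s) * X 1))
              (c := -(64*c₁^3*s^3))
              (neg_ne_zero.mpr (mul_ne_zero (mul_ne_zero (by norm_num) (pow_ne_zero _ hc1))
                (pow_ne_zero _ hs0)))
              (aux_cubes_le_I _ (aux_prodlin _ _ _ _ _ _)) ?_
            simp only [map_ofNat, map_mul, map_add, map_sub, map_neg, map_pow, map_one, map_zero,
              aeval_X, aeval_C, algebraMap_eq, Matrix.cons_val', Matrix.cons_val_zero,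
              Matrix.cons_val_one, Matrix.head_cons, Matrix.empty_val', Matrix.cons_val_fin_one,
              Matrix.head_fin_const, Matrix.of_apply]
            ring
end
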